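/- For every n ≥ 1 and every k ≥ 0, the number of permutations π of {1,…,n+1} avoiding 3124, 42153, 24153 with first entry π_1 = 1 and ides(π) = k equals the number of permutations σ of {1,…,n} avoiding 3124, 42153, 24153 with ides(σ) = k. -/

import Mathlib

/-- A word `w` contains the pattern `p`: there is an increasing choice of positions
whose entries are order-isomorphic to `p`. -/
def PatContains {n k : ℕ} (w : Fin n → ℕ) (p : Fin k → ℕ) : Prop :=
  ∃ f : Fin k → Fin n, StrictMono f ∧
    (∀ a b : Fin k, w (f a) < w (f b) ↔ p a < p b) ∧
    (∀ a b : Fin k, w (f a) = w (f b) ↔ p a = p b)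

/-- A word `w` avoids the pattern `p`. -/
def PatAvoids {n k : ℕ} (w : Fin n → ℕ) (p : Fin k → ℕ) : Prop := ¬ PatContains w p

/-- The number of ascents of a word: positions `i` with `w i < w (i+1)`. -/
noncomputable def ascNum {n : ℕ} (w : Fin n → ℕ) : ℕ :=
  Nat.card {q : Fin n × Fin n // (q.2 : ℕ) = (q.1 : ℕ) + 1 ∧ w q.1 < w q.2}

/-- The number of descents of a word: positions `i` with `w i > w (i+1)`. -/
noncomputable def desNum {n : ℕ} (w : Fin n → ℕ) : ℕ :=
  Nat.card {q : Fin n × Fin n // (q.2 : ℕ) = (q.1 : ℕ) + 1 ∧ w q.2 < w q.1}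

/-- `ides π` is the number of descents of the inverse permutation of `π`. -/
noncomputable def ides {n : ℕ} (π : Equiv.Perm (Fin n)) : ℕ :=
  desNum (fun i => ((π.symm i : Fin n) : ℕ))

/-- A permutation (viewed as the word of its values) avoids all of
the patterns 3124, 42153, 24153. -/
def AvoidsI {n : ℕ} (π : Equiv.Perm (Fin n)) : Prop :=
  PatAvoids (fun i => ((π i : Fin n) : ℕ)) ![3,1,2,4] ∧
  PatAvoids (fun i => ((π i : Fin n) : ℕ)) ![4,2,1,5,3] ∧
  PatAvoids (fun i => ((π i : Fin n) : ℕ)) ![2,4,1,5,3]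

/-- The `i`-th letter of the word `w_π` is `L`, i.e. the entry `i+2` (1-based)
lies strictly to the left of the entry `1`.  (0-based: the value `i+1` lies to
the left of the value `0`.) -/
def permLetterL {n : ℕ} (π : Equiv.Perm (Fin n)) (i : Fin (n - 1)) : Prop :=
  π.symm ⟨(i : ℕ) + 1, by have := i.isLt; omega⟩ < π.symm ⟨0, by have := i.isLt; omega⟩

/-- The word `w_π` has an alternating subword of length `k`. -/
def HasAltSub {n : ℕ} (π : Equiv.Perm (Fin n)) (k : ℕ) : Prop :=
  ∃ f : Fin k → Fin (n - 1), StrictMono f ∧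
    ∀ a b : Fin k, (b : ℕ) = (a : ℕ) + 1 →
      ¬ (permLetterL π (f a) ↔ permLetterL π (f b))

/-- `alt(π) = k`: the longest alternating subword of `w_π` has length exactly `k`. -/
def altEq {n : ℕ} (π : Equiv.Perm (Fin n)) (k : ℕ) : Prop :=
  HasAltSub π k ∧ ¬ HasAltSub π (k + 1)

/-- The first letter of `w_π` is `L`, i.e. `π⁻¹(2) < π⁻¹(1)`. -/
def FirstL {n : ℕ} (π : Equiv.Perm (Fin n)) : Prop :=
  ∃ a b : Fin n, (a : ℕ) = 0 ∧ (b : ℕ) = 1 ∧ π.symm b < π.symm a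

/-- The first letter of `w_π` is `R`, i.e. `π⁻¹(2) > π⁻¹(1)`. -/
def FirstR {n : ℕ} (π : Equiv.Perm (Fin n)) : Prop :=
  ∃ a b : Fin n, (a : ℕ) = 0 ∧ (b : ℕ) = 1 ∧ π.symm a < π.symm b

section Aux

open Equiv

/-- Extend a permutation of `Fin n` to `Fin (n+1)` by fixing `0` and shifting. -/
def extPerm {n : ℕ} (σ : Equiv.Perm (Fin n)) : Equiv.Perm (Fin (n + 1)) :=
  (finSuccEquiv n).symm.permCongr σ.optionCongr

@[simp] lemma extPerm_zero {n : ℕ} (σ : Equiv.Perm (Fin n)) : extPerm σ 0 = 0 := by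
  simp [extPerm, Equiv.permCongr_apply]

@[simp] lemma extPerm_succ {n : ℕ} (σ : Equiv.Perm (Fin n)) (i : Fin n) :
    extPerm σ i.succ = (σ i).succ := by
  simp [extPerm, Equiv.permCongr_apply]

@[simp] lemma extPerm_symm {n : ℕ} (σ : Equiv.Perm (Fin n)) :
    (extPerm σ).symm = extPerm σ.symm := by
  refine Equiv.ext fun x => ?_
  rw [Equiv.symm_apply_eq]
  induction x using Fin.cases with
  | zero => simp
  | succ i => simp

/-- Generic shift lemma for descent numbers. -/
lemma desNum_shift {n : ℕ} (w : Fin (n + 1) → ℕ) (v : Fin n → ℕ)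
    (h0 : w 0 = 0) (hs : ∀ i : Fin n, w i.succ = v i + 1) : desNum w = desNum v := by
  unfold desNum
  refine (Nat.card_eq_of_bijective
    (fun q => ⟨(q.1.1.succ, q.1.2.succ),
      by obtain ⟨⟨a, b⟩, hab, hd⟩ := q; simpa using hab,
      by obtain ⟨⟨a, b⟩, hab, hd⟩ := q; simpa [hs] using hd⟩) ⟨?_, ?_⟩).symm
  · rintro ⟨⟨a, b⟩, h⟩ ⟨⟨a', b'⟩, h'⟩ hh
    simp only [Subtype.mk.injEq, Prod.mk.injEq, Fin.succ_inj] at hh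
    simp [Subtype.ext_iff, Prod.ext_iff, hh.1, hh.2]
  · rintro ⟨⟨a, b⟩, hab, hd⟩
    dsimp only at hab hd
    have ha : a ≠ 0 := by
      rintro rfl
      simp [h0] at hd
    have hb : b ≠ 0 := by
      rintro rfl
      simp at hab
    refine ⟨⟨(a.pred ha, b.pred hb), ?_, ?_⟩, ?_⟩
    · have ha' : (a : ℕ) ≠ 0 := fun h => ha (Fin.ext h)
      have hb' : (b : ℕ) ≠ 0 := fun h => hb (Fin.ext h)
      dsimp only
      simp only [Fin.coe_pred]
      omega
    · have e1 := hs (a.pred ha)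
      have e2 := hs (b.pred hb)
      rw [Fin.succ_pred] at e1 e2
      dsimp only
      omega
    · simp [Subtype.ext_iff]

/-- Generic shift lemma for pattern containment, for patterns whose first
entry is not a strict minimum. -/
lemma patContains_shift {n m : ℕ} [NeZero m] (w : Fin (n + 1) → ℕ) (v : Fin n → ℕ)
    (h0 : w 0 = 0) (hs : ∀ i : Fin n, w i.succ = v i + 1)
    (p : Fin m → ℕ) (j : Fin m) (hj : p j < p 0) :
    PatContains w p ↔ PatContains v p := by
  constructor
  · rintro ⟨f, hf, h1, h2⟩
    have hne : ∀ a : Fin m, f a ≠ 0 := by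
      intro a
      have h00 : f 0 ≠ 0 := by
        intro hz
        have := (h1 j 0).mpr hj
        rw [hz, h0] at this
        exact Nat.not_lt_zero _ this
      intro hz
      rcases eq_or_ne a 0 with rfl | ha
      · exact h00 hz
      · have h0a : (0 : Fin m) < a := (Fin.pos_iff_ne_zero' a).mpr ha
        have hlt : f 0 < f a := hf h0a
        rw [hz] at hlt
        exact absurd hlt (by simp)
    refine ⟨fun a => (f a).pred (hne a), ?_, ?_, ?_⟩
    · intro a b hab
      have := hf hab
      rwa [Fin.pred_lt_pred_iff]
    · intro a b
      have ea := hs ((f a).pred (hne a))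
      have eb := hs ((f b).pred (hne b))
      rw [Fin.succ_pred] at ea eb
      rw [← h1 a b, ea, eb]
      dsimp only
      omega
    · intro a b
      have ea := hs ((f a).pred (hne a))
      have eb := hs ((f b).pred (hne b))
      rw [Fin.succ_pred] at ea eb
      rw [← h2 a b, ea, eb]
      dsimp only
      omega
  · rintro ⟨f, hf, h1, h2⟩
    refine ⟨fun a => (f a).succ, fun a b hab => ?_, ?_, ?_⟩
    · simpa [Fin.succ_lt_succ_iff] using hf hab
    · intro a b
      rw [hs, hs, ← h1 a b]
      omega
    · intro a b
      rw [hs, hs, ← h2 a b]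
      omega

lemma ides_extPerm {n : ℕ} (σ : Equiv.Perm (Fin n)) : ides (extPerm σ) = ides σ := by
  unfold ides
  refine desNum_shift _ (fun i => ((σ.symm i : Fin n) : ℕ)) ?_ ?_
  · simp
  · intro i
    simp

lemma avoidsI_extPerm {n : ℕ} (σ : Equiv.Perm (Fin n)) :
    AvoidsI (extPerm σ) ↔ AvoidsI σ := by
  unfold AvoidsI PatAvoids
  have h0 : (fun i => ((extPerm σ i : Fin (n + 1)) : ℕ)) 0 = 0 := by simp
  have hs : ∀ i : Fin n, (fun i => ((extPerm σ i : Fin (n + 1)) : ℕ)) i.succ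
      = (fun i => ((σ i : Fin n) : ℕ)) i + 1 := by
    intro i; simp
  rw [patContains_shift (fun i => ((extPerm σ i : Fin (n + 1)) : ℕ))
        (fun i => ((σ i : Fin n) : ℕ)) h0 hs ![3,1,2,4] 1 (by norm_num),
    patContains_shift (fun i => ((extPerm σ i : Fin (n + 1)) : ℕ))
        (fun i => ((σ i : Fin n) : ℕ)) h0 hs ![4,2,1,5,3] 1 (by norm_num),
    patContains_shift (fun i => ((extPerm σ i : Fin (n + 1)) : ℕ))
        (fun i => ((σ i : Fin n) : ℕ)) h0 hs ![2,4,1,5,3] 2 (by decide)]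

/-- Restrict a permutation of `Fin (n+1)` fixing `0` to `Fin n`. -/
def restrictPerm {n : ℕ} (π : Equiv.Perm (Fin (n + 1))) (h : π 0 = 0) :
    Equiv.Perm (Fin n) where
  toFun i := (π i.succ).pred (by
    intro hz
    exact Fin.succ_ne_zero i (π.injective (hz.trans h.symm)))
  invFun i := (π.symm i.succ).pred (by
    intro hz
    have hz2 : i.succ = 0 := by rw [← h, ← hz, Equiv.apply_symm_apply]
    exact Fin.succ_ne_zero i hz2)
  left_inv i := by simp
  right_inv i := by simp

lemma extPerm_restrict {n : ℕ} (π : Equiv.Perm (Fin (n + 1))) (h : π 0 = 0) :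
    extPerm (restrictPerm π h) = π := by
  ext x
  induction x using Fin.cases with
  | zero => simp [h]
  | succ i => simp [restrictPerm, extPerm_succ, Equiv.coe_fn_mk]

end Aux

/-- permutations of `{1,…,n+1}` in the avoidance class of
{3124, 42153, 24153} starting with the entry `1` (0-based: `π 0 = 0`) with
`ides = k` are equinumerous with class permutations of `{1,…,n}` with `ides = k`. -/
theorem stmt_7 (n k : ℕ) (hn : 1 ≤ n) :
    Nat.card {π : Equiv.Perm (Fin (n + 1)) //
      AvoidsI π ∧ π 0 = 0 ∧ ides π = k} =
    Nat.card {σ : Equiv.Perm (Fin n) // AvoidsI σ ∧ ides σ = k} := by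
  refine (Nat.card_eq_of_bijective
    (fun s : {σ : Equiv.Perm (Fin n) // AvoidsI σ ∧ ides σ = k} =>
      (⟨extPerm s.1, (avoidsI_extPerm s.1).mpr s.2.1, extPerm_zero s.1,
        (ides_extPerm s.1).trans s.2.2⟩ :
        {π : Equiv.Perm (Fin (n + 1)) // AvoidsI π ∧ π 0 = 0 ∧ ides π = k}))
    ⟨?_, ?_⟩).symm
  · rintro ⟨σ, hσ⟩ ⟨σ', hσ'⟩ hh
    simp only [Subtype.mk.injEq] at hh
    refine Subtype.ext (Equiv.ext fun i => ?_)
    have := congrArg (fun e : Equiv.Perm (Fin (n + 1)) => e i.succ) hh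
    simpa [Fin.succ_inj] using this
  · rintro ⟨π, h1, h2, h3⟩
    refine ⟨⟨restrictPerm π h2, ?_, ?_⟩, ?_⟩
    · rw [← avoidsI_extPerm, extPerm_restrict]; exact h1
    · rw [← ides_extPerm, extPerm_restrict]; exact h3
    · exact Subtype.ext (extPerm_restrict π h2)
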